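/- (Lower bound on g_k via sorted partial sums) Let R ∪ S partition [n] with m_S := min{aⱼ : j ∈ S} > 0. For Δ ∈ ℝ₊^S and 0 ≤ k ≤ ν, define g_k(Δ) := min{Σ_{j∈S, j>k} Δⱼ(1 − zⱼ) : z ∈ P_k}, and let Δ[k, l] denote the sum of the smallest l − |{j ∈ S : j ≤ k}| elements of {Δⱼ : j ∈ S, j > k}. Then g_k(Δ) ≥ Δ[k, |S| − ⌊(p − s_k)/m_S⌋]. -/

import Mathlib

open Finset

/-- Membership in the mixing set with knapsack constraint `Q`. -/
def memQ (n : ℕ) (h a : Fin n → ℝ) (p : ℝ) (y : ℝ) (z : Fin n → ℝ) : Prop :=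
  0 ≤ y ∧ (∀ j, z j = 0 ∨ z j = 1) ∧ (∑ j, a j * z j) ≤ p ∧ ∀ j, h j ≤ y + h j * z j

/-- Partial sum `s_k = ∑_{j ≤ k} a_j` (1-indexed paper notation; here the first `k`
0-based indices). -/
def sk (n : ℕ) (a : Fin n → ℝ) (k : ℕ) : ℝ :=
  ∑ j ∈ univ.filter (fun j : Fin n => (j : ℕ) < k), a j

/-- Membership in the residual knapsack set `P_k`. -/
def memPk (n : ℕ) (a : Fin n → ℝ) (p : ℝ) (k : ℕ) (z : Fin n → ℝ) : Prop :=
  (∀ j, z j = 0 ∨ z j = 1) ∧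
    (∑ j ∈ univ.filter (fun j : Fin n => k ≤ (j : ℕ)), a j * z j) ≤ p - sk n a k

/-- The minimizer function `f_k(α) = min{ ∑_{j > k} α_j z_j : z ∈ P_k }`. -/
noncomputable def fk (n : ℕ) (a : Fin n → ℝ) (p : ℝ) (α : Fin n → ℝ) (k : ℕ) : ℝ :=
  sInf {x : ℝ | ∃ z : Fin n → ℝ, memPk n a p k z ∧
    x = ∑ j ∈ univ.filter (fun j : Fin n => k ≤ (j : ℕ)), α j * z j}

/-- Lower bound on `g_k` via sorted partial sums: `g_k(Δ) ≥ Δ[k, |S| - ⌊(p-s_k)/m_S⌋]`,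
where `Δ[k, l]` (the sum of the smallest `l - |{j ∈ S : j ≤ k}|` elements of
`{Δ_j : j ∈ S, j > k}`) is expressed as the minimum of `∑_{j∈G} Δ_j` over subsets
`G` of `{j ∈ S : j > k}` of that cardinality. -/
theorem stmt17 (n : ℕ) (hn : 0 < n) (a : Fin n → ℝ) (p : ℝ)
    (hann : ∀ j, 0 ≤ a j) (hap : ∀ j, a j ≤ p) (hsum : p < ∑ j, a j)
    (ν : ℕ) (hνn : ν < n) (hν1 : sk n a ν ≤ p) (hν2 : p < sk n a (ν + 1))
    (S : Finset (Fin n)) (Δ : Fin n → ℝ) (hΔ : ∀ j ∈ S, 0 ≤ Δ j)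
    (mS : ℝ) (hmS0 : 0 < mS) (hmSle : ∀ j ∈ S, mS ≤ a j)
    (hmSmem : ∃ j ∈ S, a j = mS) :
    ∀ k : ℕ, k ≤ ν →
      sInf {x : ℝ | ∃ G : Finset (Fin n),
          G ⊆ S.filter (fun j : Fin n => k ≤ (j : ℕ)) ∧
          (G.card : ℤ) =
            (((S.filter (fun j : Fin n => k ≤ (j : ℕ))).card : ℤ) -
              ⌊(p - sk n a k) / mS⌋) ∧
          x = ∑ j ∈ G, Δ j} ≤
      sInf {x : ℝ | ∃ z : Fin n → ℝ, memPk n a p k z ∧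
          x = ∑ j ∈ S.filter (fun j : Fin n => k ≤ (j : ℕ)), Δ j * (1 - z j)} := by
  intro k hk
  set T := S.filter (fun j : Fin n => k ≤ (j : ℕ)) with hT
  have hskν : sk n a k ≤ sk n a ν := by
    apply Finset.sum_le_sum_of_subset_of_nonneg
    · intro j hj
      simp only [Finset.mem_filter, Finset.mem_univ, true_and] at *
      omega
    · intro j _ _; exact hann j
  have hps : (0:ℝ) ≤ p - sk n a k := by linarith
  have hfl0 : 0 ≤ ⌊(p - sk n a k) / mS⌋ := Int.floor_nonneg.2 (div_nonneg hps hmS0.le)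
  set F : ℕ := (⌊(p - sk n a k) / mS⌋).toNat with hF
  have hFZ : (F : ℤ) = ⌊(p - sk n a k) / mS⌋ := Int.toNat_of_nonneg hfl0
  -- B is nonempty (take z = 0)
  have hBne : {x : ℝ | ∃ z : Fin n → ℝ, memPk n a p k z ∧
      x = ∑ j ∈ T, Δ j * (1 - z j)}.Nonempty := by
    refine ⟨∑ j ∈ T, Δ j * (1 - 0), fun _ => 0, ⟨fun j => Or.inl rfl, ?_⟩, rfl⟩
    simpa using hps
  have hBnn : ∀ x ∈ {x : ℝ | ∃ z : Fin n → ℝ, memPk n a p k z ∧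
      x = ∑ j ∈ T, Δ j * (1 - z j)}, (0:ℝ) ≤ x := by
    rintro x ⟨z, ⟨hz01, _⟩, rfl⟩
    apply Finset.sum_nonneg
    intro j hj
    have hjS : j ∈ S := (Finset.mem_filter.1 hj).1
    have : (0:ℝ) ≤ 1 - z j := by rcases hz01 j with h | h <;> rw [h] <;> norm_num
    exact mul_nonneg (hΔ j hjS) this
  -- key counting: for z in P_k, at most F ones in T
  have key : ∀ z : Fin n → ℝ, memPk n a p k z →
      (T.filter (fun j => z j = 1)).card ≤ F := by
    intro z hz
    obtain ⟨hz01, hzsum⟩ := hz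
    set Z1 := T.filter (fun j => z j = 1) with hZ1
    have h1 : mS * (Z1.card : ℝ) ≤ p - sk n a k := by
      have hc1 : mS * (Z1.card : ℝ) ≤ ∑ j ∈ Z1, a j := by
        rw [mul_comm]
        have := Finset.card_nsmul_le_sum Z1 a mS
          (fun j hj => hmSle j (Finset.mem_filter.1 ((Finset.mem_filter.1 hj).1)).1)
        simpa [nsmul_eq_mul] using this
      have hc2 : ∑ j ∈ Z1, a j = ∑ j ∈ Z1, a j * z j := by
        apply Finset.sum_congr rfl
        intro j hj
        rw [(Finset.mem_filter.1 hj).2, mul_one]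
      have hc3 : ∑ j ∈ Z1, a j * z j ≤
          ∑ j ∈ univ.filter (fun j : Fin n => k ≤ (j : ℕ)), a j * z j := by
        apply Finset.sum_le_sum_of_subset_of_nonneg
        · intro j hj
          have h1 := Finset.mem_filter.1 ((Finset.mem_filter.1 hj).1)
          exact Finset.mem_filter.2 ⟨Finset.mem_univ j, h1.2⟩
        · intro j _ _
          have : (0:ℝ) ≤ z j := by rcases hz01 j with h | h <;> rw [h] <;> norm_num
          exact mul_nonneg (hann j) this
      calc mS * (Z1.card : ℝ) ≤ ∑ j ∈ Z1, a j := hc1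
        _ = ∑ j ∈ Z1, a j * z j := hc2
        _ ≤ _ := hc3
        _ ≤ p - sk n a k := hzsum
    have h2 : (Z1.card : ℝ) ≤ (p - sk n a k) / mS := by
      rw [le_div_iff₀ hmS0]; linarith [h1]
    have h3 : (Z1.card : ℤ) ≤ ⌊(p - sk n a k) / mS⌋ := Int.le_floor.2 (by push_cast; exact h2)
    omega
  by_cases hcase : F ≤ T.card
  · -- main case
    apply le_csInf hBne
    rintro b ⟨z, hz, rfl⟩
    -- pick G among zeros of z in T
    set Z0 := T.filter (fun j => z j = 0) with hZ0
    have heq1 : T.filter (fun j => z j = 1) = T.filter (fun j => ¬ z j = 0) := by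
      apply Finset.filter_congr
      intro j _
      rcases hz.1 j with h | h <;> simp [h]
    have hsplit : Z0.card + (T.filter (fun j => z j = 1)).card = T.card := by
      rw [hZ0, heq1, Finset.card_filter_add_card_filter_not]
    have hZ0card : T.card - F ≤ Z0.card := by
      have := key z hz; omega
    obtain ⟨G, hGsub, hGcard⟩ := Finset.exists_subset_card_eq (s := Z0) (n := T.card - F) hZ0card
    have hGT : G ⊆ T := hGsub.trans (Finset.filter_subset _ _)
    have hGle : ∑ j ∈ G, Δ j ≤ ∑ j ∈ T, Δ j * (1 - z j) := by
      have h0 : ∑ j ∈ G, Δ j = ∑ j ∈ G, Δ j * (1 - z j) := by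
        apply Finset.sum_congr rfl
        intro j hj
        have := (Finset.mem_filter.1 (hGsub hj)).2
        rw [this]; ring
      rw [h0]
      apply Finset.sum_le_sum_of_subset_of_nonneg hGT
      intro j hj _
      have hjS : j ∈ S := (Finset.mem_filter.1 hj).1
      have : (0:ℝ) ≤ 1 - z j := by rcases hz.1 j with h | h <;> rw [h] <;> norm_num
      exact mul_nonneg (hΔ j hjS) this
    refine le_trans (csInf_le ?_ ?_) hGle
    · refine ⟨0, ?_⟩
      rintro x ⟨G', hG'sub, _, rfl⟩
      exact Finset.sum_nonneg fun j hj => hΔ j (Finset.mem_filter.1 (hG'sub hj)).1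
    · exact ⟨G, hGT, by rw [hGcard]; push_cast [hFZ.symm]; omega, rfl⟩
  · -- degenerate case: A empty, sInf A = 0
    have hAempty : {x : ℝ | ∃ G : Finset (Fin n), G ⊆ T ∧
        (G.card : ℤ) = ((T.card : ℤ) - ⌊(p - sk n a k) / mS⌋) ∧
        x = ∑ j ∈ G, Δ j} = ∅ := by
      ext x
      simp only [Set.mem_setOf_eq, Set.mem_empty_iff_false, iff_false]
      rintro ⟨G, _, hGcard, _⟩
      omega
    rw [hAempty, Real.sInf_empty]
    exact le_csInf hBne hBnn
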